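/- Define a generalized complexity function cplx on formulas (relative to a separating sequence θ₀,…,θ_s with θ₀ = id) by: cplx(φ) = 0 if φ is basic (of the form θ_r(ψ) with ψ atomic or a sentential constant) or an intersection formula, and cplx(θ_r(⊙(φ₁,…,φ_k))) = 1 + max over 0 ≤ t ≤ s and 1 ≤ i ≤ k of cplx(θ_t(φ_i)) when θ_r⊙ is the most concrete fit. Then cplx is well-defined (the recursion terminates) and for every proper θ_r⊙-formula φ = θ_r(⊙(φ₁,…,φ_k)) and every 0 ≤ t ≤ s, 1 ≤ i ≤ k, one has cplx(θ_t(φ_i)) < cplx(φ). -/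

import Mathlib

namespace Stmt14

/-- Terms (formulas) over a signature `σ` with arity `ar`, variables from `A`. -/
inductive Tm (σ : Type) (ar : σ → ℕ) (A : Type) : Type
  | var (a : A) : Tm σ ar A
  | app (f : σ) (ts : Fin (ar f) → Tm σ ar A) : Tm σ ar A

/-- Substitution of `ψ` for the unique variable of the one-variable term `θ`. -/
def Tm.subst1 {σ : Type} {ar : σ → ℕ} {A : Type} (θ : Tm σ ar Unit) (ψ : Tm σ ar A) :
    Tm σ ar A :=
  match θ with
  | .var _ => ψ
  | .app f ts => .app f (fun i => (ts i).subst1 ψ)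

variable {σ : Type} {ar : σ → ℕ} {s : ℕ}

/-- The instance set S(θ_r ⊙) of the pattern θ_r(⊙(q₁,…,q_k)). -/
def pat (θ : Fin (s + 1) → Tm σ ar Unit) (r : Fin (s + 1)) (f : σ) :
    Set (Tm σ ar ℕ) :=
  {x | ∃ args : Fin (ar f) → Tm σ ar ℕ, x = (θ r).subst1 (Tm.app f args)}

/-- θ_r⊙ is a fit for φ. -/
def Fit (θ : Fin (s + 1) → Tm σ ar Unit) (r : Fin (s + 1)) (f : σ)
    (φ : Tm σ ar ℕ) : Prop :=
  φ ∈ pat θ r f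

/-- φ is basic: a separator applied to an atomic variable or a sentential constant. -/
def Basic (θ : Fin (s + 1) → Tm σ ar Unit) (φ : Tm σ ar ℕ) : Prop :=
  ∃ (r : Fin (s + 1)) (ψ : Tm σ ar ℕ),
    ((∃ a : ℕ, ψ = Tm.var a) ∨
     (∃ (c : σ) (args : Fin (ar c) → Tm σ ar ℕ), ar c = 0 ∧ ψ = Tm.app c args)) ∧
    φ = (θ r).subst1 ψ

/-- φ is an intersection formula: the unique common instance of two distinct patterns. -/
def Inter (θ : Fin (s + 1) → Tm σ ar Unit) (φ : Tm σ ar ℕ) : Prop :=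
  ∃ (r₁ : Fin (s + 1)) (f₁ : σ) (r₂ : Fin (s + 1)) (f₂ : σ),
    (r₁, f₁) ≠ (r₂, f₂) ∧ pat θ r₁ f₁ ∩ pat θ r₂ f₂ = {φ}

/-- φ is a proper θ_r⊙-formula: nonbasic, not an intersection formula, with
θ_r⊙ its most concrete fit (⊙ of nonzero arity). -/
def Proper (θ : Fin (s + 1) → Tm σ ar Unit) (r : Fin (s + 1)) (f : σ)
    (φ : Tm σ ar ℕ) : Prop :=
  ¬ Basic θ φ ∧ ¬ Inter θ φ ∧ 0 < ar f ∧ Fit θ r f φ ∧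
    ∀ (r' : Fin (s + 1)) (f' : σ), Fit θ r' f' φ → pat θ r f ⊆ pat θ r' f'

def size {A : Type} : Tm σ ar A → ℕ
  | .var _ => 1
  | .app _ ts => 1 + ∑ i, size (ts i)

def occ : Tm σ ar Unit → ℕ
  | .var _ => 1
  | .app _ ts => ∑ i, occ (ts i)

lemma exists_occ_pos {g : σ} {us : Fin (ar g) → Tm σ ar Unit}
    (h : 1 ≤ occ (Tm.app g us)) : ∃ i, 1 ≤ occ (us i) := by
  by_contra hc
  push_neg at hc
  simp only [Nat.lt_one_iff] at hc
  have : occ (Tm.app g us) = 0 := by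
    simp [occ, Finset.sum_eq_zero (fun i _ => hc i)]
  omega

lemma subst_app_ne_var {θ' : Tm σ ar Unit} {g : σ} {x : Fin (ar g) → Tm σ ar ℕ}
    {a : ℕ} : θ'.subst1 (Tm.app g x) ≠ Tm.var a := by
  cases θ' <;> intro h <;> simp [Tm.subst1] at h

lemma subst_ground : ∀ (θ' : Tm σ ar Unit), occ θ' = 0 →
    ∀ (ψ ψ' : Tm σ ar ℕ), θ'.subst1 ψ = θ'.subst1 ψ'
  | .var _, h => by simp [occ] at h
  | .app g us, h => by
    intro ψ ψ'
    have h0 : ∀ i, occ (us i) = 0 := by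
      simp only [occ] at h
      intro i
      exact Finset.sum_eq_zero_iff.mp h i (Finset.mem_univ i)
    show Tm.app g _ = Tm.app g _
    congr 1
    funext i
    exact subst_ground (us i) (h0 i) ψ ψ'


lemma subst1_var (ψ : Tm σ ar ℕ) : (Tm.var () : Tm σ ar Unit).subst1 ψ = ψ := rfl

lemma subst1_app (g : σ) (us : Fin (ar g) → Tm σ ar Unit) (ψ : Tm σ ar ℕ) :
    (Tm.app g us).subst1 ψ = Tm.app g (fun i => (us i).subst1 ψ) := rfl

lemma subst_inj : ∀ (θ' : Tm σ ar Unit), 1 ≤ occ θ' →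
    ∀ (ψ ψ' : Tm σ ar ℕ), θ'.subst1 ψ = θ'.subst1 ψ' → ψ = ψ'
  | .var _, _, ψ, ψ', h => h
  | .app g us, hocc, ψ, ψ', h => by
    obtain ⟨i0, hi0⟩ := exists_occ_pos hocc
    simp only [subst1_app] at h
    injection h with _ h2
    exact subst_inj (us i0) hi0 _ _ (congrFun h2 i0)

lemma ground_eq : ∀ (θ' η : Tm σ ar Unit), occ θ' = 0 → occ η = 0 →
    ∀ (ψ ψ' : Tm σ ar ℕ), θ'.subst1 ψ = η.subst1 ψ' → θ' = η
  | .var _, _, h, _, _, _, _ => by simp [occ] at h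
  | .app _ _, .var _, _, h, _, _, _ => by simp [occ] at h
  | .app g us, .app g' us', h, h', ψ, ψ', he => by
    have h0 : ∀ i, occ (us i) = 0 := by
      simp only [occ] at h
      exact fun i => Finset.sum_eq_zero_iff.mp h i (Finset.mem_univ i)
    simp only [subst1_app] at he
    injection he with e1 e2
    subst e1
    have h0' : ∀ i, occ (us' i) = 0 := by
      simp only [occ] at h'
      exact fun i => Finset.sum_eq_zero_iff.mp h' i (Finset.mem_univ i)
    have e2' : (fun i => (us i).subst1 ψ) = (fun i => (us' i).subst1 ψ') := eq_of_heq e2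
    congr 1
    funext i
    exact ground_eq (us i) (us' i) (h0 i) (h0' i) _ _ (congrFun e2' i)

lemma size_le_subst : ∀ (θ' : Tm σ ar Unit), 1 ≤ occ θ' →
    ∀ (ψ : Tm σ ar ℕ), size ψ ≤ size (θ'.subst1 ψ)
  | .var _, _, ψ => le_of_eq rfl
  | .app g us, hocc, ψ => by
    obtain ⟨i0, hi0⟩ := exists_occ_pos hocc
    have h1 : size ψ ≤ size ((us i0).subst1 ψ) := size_le_subst (us i0) hi0 ψ
    calc size ψ ≤ size ((us i0).subst1 ψ) := h1
      _ ≤ ∑ i, size ((us i).subst1 ψ) :=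
        Finset.single_le_sum (f := fun i => size ((us i).subst1 ψ))
          (fun i _ => Nat.zero_le _) (Finset.mem_univ i0)
      _ ≤ size ((Tm.app g us).subst1 ψ) := by
        simp only [subst1_app, size]; omega

lemma size_arg_lt {g : σ} (x : Fin (ar g) → Tm σ ar ℕ) (i : Fin (ar g)) :
    size (x i) < size (Tm.app g x) := by
  have : size (x i) ≤ ∑ j, size (x j) :=
    Finset.single_le_sum (f := fun j => size (x j))
      (fun j _ => Nat.zero_le _) (Finset.mem_univ i)
  simp only [size]; omega

lemma key {f f' : σ} (hf : 0 < ar f) :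
    ∀ (η θ' : Tm σ ar Unit), 1 ≤ occ θ' →
    (∀ x : Fin (ar f) → Tm σ ar ℕ, ∃ y : Fin (ar f') → Tm σ ar ℕ,
      θ'.subst1 (Tm.app f x) = η.subst1 (Tm.app f' y)) →
    ∀ (x : Fin (ar f) → Tm σ ar ℕ) (y : Fin (ar f') → Tm σ ar ℕ),
      θ'.subst1 (Tm.app f x) = η.subst1 (Tm.app f' y) →
      size (Tm.app f x) ≤ size (Tm.app f' y)
  | .var _, θ', hocc, hall, x, y, he => by
    rw [subst1_var] at he
    calc size (Tm.app f x) ≤ size (θ'.subst1 (Tm.app f x)) := size_le_subst θ' hocc _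
      _ = size (Tm.app f' y) := by rw [he]
  | .app h ts, .var _, hocc, hall, x, y, he => by
    exfalso
    obtain ⟨y0, e0⟩ := hall (fun _ => Tm.var 0)
    rw [subst1_var, subst1_app] at e0
    injection e0 with e1 e2
    subst e1
    have e2' := congrFun (eq_of_heq e2) ⟨0, hf⟩
    exact subst_app_ne_var e2'.symm
  | .app h ts, .app g us, hocc, hall, x, y, he => by
    simp only [subst1_app] at he
    injection he with e1 e2
    subst e1
    have e2' := congrFun (eq_of_heq e2)
    obtain ⟨i0, hi0⟩ := exists_occ_pos hocc
    have hall' : ∀ x' : Fin (ar f) → Tm σ ar ℕ, ∃ y' : Fin (ar f') → Tm σ ar ℕ,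
        (us i0).subst1 (Tm.app f x') = (ts i0).subst1 (Tm.app f' y') := by
      intro x'
      obtain ⟨y', hy'⟩ := hall x'
      simp only [subst1_app] at hy'
      injection hy' with _ h2
      exact ⟨y', congrFun h2 i0⟩
    exact key hf (ts i0) (us i0) hi0 hall' x y (e2' i0)


lemma uniq {f f' : σ} (hf : 0 < ar f) (hf' : 0 < ar f') :
    ∀ (η θ' : Tm σ ar Unit), 1 ≤ occ θ' →
    (∀ x : Fin (ar f) → Tm σ ar ℕ, ∃ y : Fin (ar f') → Tm σ ar ℕ,
      θ'.subst1 (Tm.app f x) = η.subst1 (Tm.app f' y)) →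
    (∀ y : Fin (ar f') → Tm σ ar ℕ, ∃ x : Fin (ar f) → Tm σ ar ℕ,
      θ'.subst1 (Tm.app f x) = η.subst1 (Tm.app f' y)) →
    θ' = η ∧ f = f'
  | .var _, .var _, _, h12, _ => by
    obtain ⟨y, hy⟩ := h12 (fun _ => Tm.var 0)
    rw [subst1_var, subst1_var] at hy
    injection hy with e1 _
    exact ⟨rfl, e1⟩
  | .var _, .app g us, hocc, h12, h21 => by
    exfalso
    obtain ⟨i0, hi0⟩ := exists_occ_pos hocc
    obtain ⟨x, hx⟩ := h21 (fun _ => Tm.var 0)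
    rw [subst1_var, subst1_app] at hx
    injection hx with e1 e2
    subst e1
    have := congrFun (eq_of_heq e2) i0
    exact subst_app_ne_var this
  | .app h ts, .var _, _, h12, _ => by
    exfalso
    obtain ⟨y, hy⟩ := h12 (fun _ => Tm.var 0)
    rw [subst1_var, subst1_app] at hy
    injection hy with e1 e2
    subst e1
    have := congrFun (eq_of_heq e2) ⟨0, hf⟩
    exact subst_app_ne_var this.symm
  | .app h ts, .app g us, hocc, h12, h21 => by
    -- heads are equal
    obtain ⟨y0, e0⟩ := h12 (fun _ => Tm.var 0)
    simp only [subst1_app] at e0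
    injection e0 with e1 _
    subst e1
    -- componentwise hypotheses
    have h12c : ∀ i, ∀ x : Fin (ar f) → Tm σ ar ℕ, ∃ y : Fin (ar f') → Tm σ ar ℕ,
        (us i).subst1 (Tm.app f x) = (ts i).subst1 (Tm.app f' y) := by
      intro i x
      obtain ⟨y, hy⟩ := h12 x
      simp only [subst1_app] at hy
      injection hy with _ h2
      exact ⟨y, congrFun h2 i⟩
    have h21c : ∀ i, ∀ y : Fin (ar f') → Tm σ ar ℕ, ∃ x : Fin (ar f) → Tm σ ar ℕ,
        (us i).subst1 (Tm.app f x) = (ts i).subst1 (Tm.app f' y) := by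
      intro i y
      obtain ⟨x, hx⟩ := h21 y
      simp only [subst1_app] at hx
      injection hx with _ h2
      exact ⟨x, congrFun h2 i⟩
    -- no mixed occurrence cases
    have hmix1 : ∀ i, 1 ≤ occ (us i) → 1 ≤ occ (ts i) := by
      intro i hui
      by_contra hti
      have hti0 : occ (ts i) = 0 := by omega
      obtain ⟨y1, hy1⟩ := h12c i (fun _ => Tm.var 0)
      obtain ⟨y2, hy2⟩ := h12c i (fun _ => Tm.var 1)
      have : (us i).subst1 (Tm.app f (fun _ => Tm.var 0)) =
          (us i).subst1 (Tm.app f (fun _ => Tm.var 1)) := by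
        rw [hy1, hy2]
        exact subst_ground (ts i) hti0 _ _
      have := subst_inj (us i) hui _ _ this
      injection this with _ h2
      have h3 := congrFun h2 ⟨0, hf⟩
      exact absurd (Tm.var.inj h3) Nat.zero_ne_one
    have hmix2 : ∀ i, 1 ≤ occ (ts i) → 1 ≤ occ (us i) := by
      intro i hti
      by_contra hui
      have hui0 : occ (us i) = 0 := by omega
      obtain ⟨x1, hx1⟩ := h21c i (fun _ => Tm.var 0)
      obtain ⟨x2, hx2⟩ := h21c i (fun _ => Tm.var 1)
      have : (ts i).subst1 (Tm.app f' (fun _ => Tm.var 0)) =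
          (ts i).subst1 (Tm.app f' (fun _ => Tm.var 1)) := by
        rw [← hx1, ← hx2]
        exact subst_ground (us i) hui0 _ _
      have := subst_inj (ts i) hti _ _ this
      injection this with _ h2
      have h3 := congrFun h2 ⟨0, hf'⟩
      exact absurd (Tm.var.inj h3) Nat.zero_ne_one
    have hcomp : ∀ i, us i = ts i ∧ (1 ≤ occ (us i) → f = f') := by
      intro i
      rcases Nat.eq_zero_or_pos (occ (us i)) with hui | hui
      · have hti : occ (ts i) = 0 := by
          by_contra hti
          have := hmix2 i (by omega)
          omega
        obtain ⟨y, hy⟩ := h12c i (fun _ => Tm.var 0)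
        exact ⟨ground_eq (us i) (ts i) hui hti _ _ hy, fun hc => by omega⟩
      · have hti : 1 ≤ occ (ts i) := hmix1 i hui
        obtain ⟨heq, hff⟩ := uniq hf hf' (ts i) (us i) hui (h12c i) (h21c i)
        exact ⟨heq, fun _ => hff⟩
    obtain ⟨i0, hi0⟩ := exists_occ_pos hocc
    refine ⟨?_, (hcomp i0).2 hi0⟩
    congr 1
    funext i
    exact (hcomp i).1


def Dec (θ : Fin (s + 1) → Tm σ ar Unit) (φ : Tm σ ar ℕ) : Prop :=
  ∃ p : (Fin (s + 1)) × (Σ f : σ, (Fin (ar f) → Tm σ ar ℕ)),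
    Proper θ p.1 p.2.1 φ ∧ φ = (θ p.1).subst1 (Tm.app p.2.1 p.2.2)

noncomputable def nu (θ : Fin (s + 1) → Tm σ ar Unit) (φ : Tm σ ar ℕ) : ℕ :=
  sInf {n | ∃ (t : Fin (s + 1)) (ψ : Tm σ ar ℕ), φ = (θ t).subst1 ψ ∧ size ψ = n}

lemma proper_occ_pos {θ : Fin (s + 1) → Tm σ ar Unit} {r t : Fin (s + 1)} {f : σ}
    {φ ψ : Tm σ ar ℕ} (hP : Proper θ r f φ) (he : φ = (θ t).subst1 ψ) :
    1 ≤ occ (θ t) := by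
  by_contra hc
  have h0 : occ (θ t) = 0 := by omega
  exact hP.1 ⟨t, Tm.var 0, Or.inl ⟨0, rfl⟩, he.trans (subst_ground (θ t) h0 _ _)⟩

lemma nu_eq {θ : Fin (s + 1) → Tm σ ar Unit} {r : Fin (s + 1)} {f : σ}
    {φ : Tm σ ar ℕ} {args : Fin (ar f) → Tm σ ar ℕ} (hP : Proper θ r f φ)
    (he : φ = (θ r).subst1 (Tm.app f args)) :
    nu θ φ = size (Tm.app f args) := by
  apply le_antisymm
  · exact Nat.sInf_le ⟨r, Tm.app f args, he, rfl⟩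
  · refine le_csInf ⟨size (Tm.app f args), ⟨r, Tm.app f args, he, rfl⟩⟩ ?_
    rintro n ⟨u, ψ, hψ, rfl⟩
    match ψ, hψ with
    | .var a, hψ => exact absurd ⟨u, Tm.var a, Or.inl ⟨a, rfl⟩, hψ⟩ hP.1
    | .app g x, hψ =>
      have hfit : Fit θ u g φ := ⟨x, hψ⟩
      have hsub := hP.2.2.2.2 u g hfit
      have hyp : ∀ x' : Fin (ar f) → Tm σ ar ℕ, ∃ y : Fin (ar g) → Tm σ ar ℕ,
          (θ r).subst1 (Tm.app f x') = (θ u).subst1 (Tm.app g y) := by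
        intro x'
        obtain ⟨y, hy⟩ := hsub ⟨x', rfl⟩
        exact ⟨y, hy⟩
      exact key hP.2.2.1 (θ u) (θ r) (proper_occ_pos hP he) hyp args x
        (he ▸ hψ)

lemma nu_lt {θ : Fin (s + 1) → Tm σ ar Unit} {r : Fin (s + 1)} {f : σ}
    {φ : Tm σ ar ℕ} {args : Fin (ar f) → Tm σ ar ℕ} (hP : Proper θ r f φ)
    (he : φ = (θ r).subst1 (Tm.app f args)) (t : Fin (s + 1)) (i : Fin (ar f)) :
    nu θ ((θ t).subst1 (args i)) < nu θ φ := by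
  have h1 : nu θ ((θ t).subst1 (args i)) ≤ size (args i) :=
    Nat.sInf_le ⟨t, args i, rfl, rfl⟩
  have h2 := size_arg_lt args i
  rw [nu_eq hP he]
  omega

attribute [local instance] Classical.propDecidable

noncomputable def cplx (θ : Fin (s + 1) → Tm σ ar Unit) (φ : Tm σ ar ℕ) : ℕ :=
  if h : Dec θ φ then
    1 + Finset.univ.sup (fun q : Fin (s + 1) × Fin (ar h.choose.2.1) =>
      cplx θ ((θ q.1).subst1 (h.choose.2.2 q.2)))
  else 0
termination_by nu θ φ
decreasing_by exact nu_lt h.choose_spec.1 h.choose_spec.2 q.1 q.2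


lemma cplx_eq_zero {θ : Fin (s + 1) → Tm σ ar Unit} {φ : Tm σ ar ℕ}
    (h : ¬ Dec θ φ) : cplx θ φ = 0 := by
  rw [cplx, dif_neg h]

lemma cplx_proper {θ : Fin (s + 1) → Tm σ ar Unit} {r : Fin (s + 1)} {f : σ}
    {args : Fin (ar f) → Tm σ ar ℕ} {φ : Tm σ ar ℕ} (hP : Proper θ r f φ)
    (he : φ = (θ r).subst1 (Tm.app f args)) :
    cplx θ φ = 1 + Finset.univ.sup
      (fun q : Fin (s + 1) × Fin (ar f) => cplx θ ((θ q.1).subst1 (args q.2))) := by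
  have hDec : Dec θ φ := ⟨⟨r, ⟨f, args⟩⟩, hP, he⟩
  rw [cplx, dif_pos hDec]
  obtain ⟨p, hp⟩ : ∃ p, hDec.choose = p := ⟨_, rfl⟩
  have hps := hDec.choose_spec
  rw [hp] at hps ⊢
  obtain ⟨hP', he'⟩ := hps
  have fit1 : Fit θ r f φ := hP.2.2.2.1
  have fit2 : Fit θ p.1 p.2.1 φ := hP'.2.2.2.1
  have sub12 := hP.2.2.2.2 p.1 p.2.1 fit2
  have sub21 := hP'.2.2.2.2 r f fit1
  have occ1 : 1 ≤ occ (θ r) := proper_occ_pos hP he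
  have h12 : ∀ x : Fin (ar f) → Tm σ ar ℕ, ∃ y : Fin (ar p.2.1) → Tm σ ar ℕ,
      (θ r).subst1 (Tm.app f x) = (θ p.1).subst1 (Tm.app p.2.1 y) := by
    intro x
    obtain ⟨y, hy⟩ := sub12 ⟨x, rfl⟩
    exact ⟨y, hy⟩
  have h21 : ∀ y : Fin (ar p.2.1) → Tm σ ar ℕ, ∃ x : Fin (ar f) → Tm σ ar ℕ,
      (θ r).subst1 (Tm.app f x) = (θ p.1).subst1 (Tm.app p.2.1 y) := by
    intro y
    obtain ⟨x, hx⟩ := sub21 ⟨y, rfl⟩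
    exact ⟨x, hx.symm⟩
  obtain ⟨hθeq, hfeq⟩ :=
    uniq hP.2.2.1 hP'.2.2.1 (θ p.1) (θ r) occ1 h12 h21
  have heq2 : (θ r).subst1 (Tm.app f args) = (θ r).subst1 (Tm.app p.2.1 p.2.2) := by
    conv_rhs => rw [hθeq]
    exact he.symm.trans he'
  have hcore := subst_inj (θ r) occ1 _ _ heq2
  subst hfeq
  injection hcore with _ h2
  subst h2
  rfl

lemma cplx_lt_of_proper {θ : Fin (s + 1) → Tm σ ar Unit} {r : Fin (s + 1)} {f : σ}
    {args : Fin (ar f) → Tm σ ar ℕ} {φ : Tm σ ar ℕ} (hP : Proper θ r f φ)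
    (he : φ = (θ r).subst1 (Tm.app f args)) (t : Fin (s + 1)) (i : Fin (ar f)) :
    cplx θ ((θ t).subst1 (args i)) < cplx θ φ := by
  rw [cplx_proper hP he]
  have : cplx θ ((θ t).subst1 (args i)) ≤ Finset.univ.sup
      (fun q : Fin (s + 1) × Fin (ar f) => cplx θ ((θ q.1).subst1 (args q.2))) :=
    Finset.le_sup (f := fun q : Fin (s + 1) × Fin (ar f) =>
      cplx θ ((θ q.1).subst1 (args q.2))) (Finset.mem_univ (t, i))
  omega

/-- the generalized complexity function cplx is well-defined:
there is a function vanishing on basic and intersection formulas, satisfying the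
recursive clause on proper θ_r⊙-formulas, and strictly decreasing from a proper
θ_r⊙-formula to the separators applied to its immediate subformulas. -/
theorem cplx_well_defined (θ : Fin (s + 1) → Tm σ ar Unit)
    (h0 : θ 0 = Tm.var ()) :
    ∃ cplx : Tm σ ar ℕ → ℕ,
      (∀ φ : Tm σ ar ℕ, Basic θ φ ∨ Inter θ φ → cplx φ = 0) ∧
      (∀ (r : Fin (s + 1)) (f : σ) (args : Fin (ar f) → Tm σ ar ℕ),
        Proper θ r f ((θ r).subst1 (Tm.app f args)) →
          cplx ((θ r).subst1 (Tm.app f args)) =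
            1 + Finset.univ.sup
              (fun p : Fin (s + 1) × Fin (ar f) => cplx ((θ p.1).subst1 (args p.2)))) ∧
      (∀ (r : Fin (s + 1)) (f : σ) (args : Fin (ar f) → Tm σ ar ℕ),
        Proper θ r f ((θ r).subst1 (Tm.app f args)) →
          ∀ (t : Fin (s + 1)) (i : Fin (ar f)),
            cplx ((θ t).subst1 (args i)) < cplx ((θ r).subst1 (Tm.app f args))) := by
  refine ⟨cplx θ, ?_, ?_, ?_⟩
  · intro φ h
    apply cplx_eq_zero
    rintro ⟨p, hP', -⟩
    rcases h with h | h
    · exact hP'.1 h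
    · exact hP'.2.1 h
  · intro r f args hP
    exact cplx_proper hP rfl
  · intro r f args hP t i
    exact cplx_lt_of_proper hP rfl t i

end Stmt14
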